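/- arXiv:1407.2199 — 2 statements merged into one kernel-verified Lean document; each statement's English description precedes it below -/
import Mathlib

section
/- Let (G,p) be an r-dimensional bar framework on n nodes in general position in ℝ^r, with r ≤ n−2. If (G,p) is universally rigid, then the graph G is (r+1)-vertex connected. -/
open Matrix

/-- A configuration `p` in `ℝ^r` is `r`-dimensional if its points affinely span `ℝ^r`. -/
def IsRDimensional {n r : ℕ} (p : Fin n → EuclideanSpace ℝ (Fin r)) : Prop :=
  affineSpan ℝ (Set.range p) = ⊤

/-- A configuration is in general position in `ℝ^r` if every `r+1` of its points are
affinely independent. -/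
def InGeneralPosition {n r : ℕ} (p : Fin n → EuclideanSpace ℝ (Fin r)) : Prop :=
  ∀ s : Finset (Fin n), s.card = r + 1 → AffineIndependent ℝ (fun i : s => p i)

/-- `(G, q)` is equivalent to `(G, p)`: corresponding edge lengths agree. -/
def FrameworkEquiv {n r r' : ℕ} (G : SimpleGraph (Fin n))
    (p : Fin n → EuclideanSpace ℝ (Fin r)) (q : Fin n → EuclideanSpace ℝ (Fin r')) : Prop :=
  ∀ i j : Fin n, G.Adj i j → ‖q i - q j‖ = ‖p i - p j‖

/-- Two configurations are congruent: all pairwise distances agree. -/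
def FrameworkCongruent {n r r' : ℕ} (p : Fin n → EuclideanSpace ℝ (Fin r))
    (q : Fin n → EuclideanSpace ℝ (Fin r')) : Prop :=
  ∀ i j : Fin n, ‖q i - q j‖ = ‖p i - p j‖

/-- `(G, p)` is universally rigid. -/
def UniversallyRigid {n r : ℕ} (G : SimpleGraph (Fin n))
    (p : Fin n → EuclideanSpace ℝ (Fin r)) : Prop :=
  ∀ r' : ℕ, 1 ≤ r' → r' ≤ n - 1 → ∀ q : Fin n → EuclideanSpace ℝ (Fin r'),
    IsRDimensional q → FrameworkEquiv G p q → FrameworkCongruent p q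

/-- `G` is `k`-vertex connected. -/
def IsKConnected {n : ℕ} (G : SimpleGraph (Fin n)) (k : ℕ) : Prop :=
  (n = k + 1 ∧ G = ⊤) ∨
  (k + 2 ≤ n ∧ ∀ S : Finset (Fin n), S.card = k - 1 →
    (G.induce ((↑S : Set (Fin n))ᶜ)).Connected)

/-- The configuration matrix of `p`. -/
def configMatrix {n r : ℕ} (p : Fin n → EuclideanSpace ℝ (Fin r)) : Matrix (Fin n) (Fin r) ℝ :=
  Matrix.of fun i k => p i k

/-- `Ω` is a stress matrix of `(G, p)`. -/
def IsStressMatrix {n r : ℕ} (G : SimpleGraph (Fin n)) (p : Fin n → EuclideanSpace ℝ (Fin r))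
    (Ω : Matrix (Fin n) (Fin n) ℝ) : Prop :=
  Ω.IsSymm ∧ (∀ i j : Fin n, i ≠ j → ¬ G.Adj i j → Ω i j = 0) ∧
  Ω * configMatrix p = 0 ∧ Ω *ᵥ (fun _ => (1 : ℝ)) = 0

/-- The matrix `[Pᵀ; eᵀ]` obtained by stacking `Pᵀ` on top of the all-ones row `eᵀ`. -/
def galeStack {n r : ℕ} (p : Fin n → EuclideanSpace ℝ (Fin r)) :
    Matrix (Fin r ⊕ Unit) (Fin n) ℝ :=
  Matrix.fromRows (Matrix.of fun k i => p i k) (Matrix.of fun _ _ => (1 : ℝ))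

/-- `Z` is a Gale matrix of `p`: its columns form a basis of the null space of `[Pᵀ; eᵀ]`. -/
def IsGaleMatrix {n r : ℕ} (p : Fin n → EuclideanSpace ℝ (Fin r))
    (Z : Matrix (Fin n) (Fin (n - r - 1)) ℝ) : Prop :=
  LinearIndependent ℝ (fun j : Fin (n - r - 1) => fun i => Z i j) ∧
  Submodule.span ℝ (Set.range (fun j : Fin (n - r - 1) => fun i => Z i j)) =
    LinearMap.ker (galeStack p).mulVecLin

open scoped RealInnerProductSpace

private lemma sq_eq_imp {a b : ℝ} (h : a ^ 2 = b ^ 2) (ha : 0 ≤ a) (hb : 0 ≤ b) : a = b := by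
  rw [← Real.sqrt_sq ha, ← Real.sqrt_sq hb, h]

private lemma not_mem_aux {n r : ℕ} (p : Fin n → EuclideanSpace ℝ (Fin r))
    (hgen : InGeneralPosition p) (S : Finset (Fin n)) (hS : S.card = r)
    {x : Fin n} (hx : x ∉ S) : p x ∉ affineSpan ℝ (p '' ↑S) := by
  have hind := hgen (insert x S) (by rw [Finset.card_insert_of_notMem hx, hS])
  have h := hind.notMem_affineSpan_diff ⟨x, Finset.mem_insert_self x S⟩ Set.univ
  have himg : (fun i : (insert x S : Finset (Fin n)) => p ↑i) ''
      (Set.univ \ {⟨x, Finset.mem_insert_self x S⟩}) = p '' ↑S := by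
    ext y
    simp only [Set.mem_image, Set.mem_diff, Set.mem_univ, true_and, Set.mem_singleton_iff]
    constructor
    · rintro ⟨⟨v, hv⟩, hne, rfl⟩
      rcases Finset.mem_insert.mp hv with h1 | h1
      · exact absurd (Subtype.ext h1) hne
      · exact ⟨v, h1, rfl⟩
    · rintro ⟨v, hv, rfl⟩
      refine ⟨⟨v, Finset.mem_insert_of_mem hv⟩, ?_, rfl⟩
      intro hvx
      apply hx
      have : v = x := congrArg Subtype.val hvx
      exact this ▸ hv
  rw [himg] at h
  exact h

private lemma key_pos {n r : ℕ} (hr : 1 ≤ r) (hrn : r + 2 ≤ n)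
    (G : SimpleGraph (Fin n)) (p : Fin n → EuclideanSpace ℝ (Fin r))
    (hgen : InGeneralPosition p) (hur : UniversallyRigid G p)
    (S : Finset (Fin n)) (hS : S.card = r) {A : Set (Fin n)}
    {a b : Fin n} (ha : a ∈ A) (hb : b ∉ A) (haS : a ∉ S) (hbS : b ∉ S)
    (hAS : ∀ i ∈ A, i ∉ S)
    (hsep : ∀ i ∈ A, ∀ j, G.Adj i j → j ∈ A ∨ j ∈ S) : False := by
  classical
  have hfr : Module.finrank ℝ (EuclideanSpace ℝ (Fin r)) = r := finrank_euclideanSpace_fin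
  obtain ⟨z0, hz0⟩ : ∃ x, x ∈ S := Finset.card_pos.mp (by omega)
  set D : Submodule ℝ (EuclideanSpace ℝ (Fin r)) := vectorSpan ℝ (p '' ↑S) with hD
  -- affine independence of p on S
  have hSnonempty : (S : Set (Fin n)).Nonempty := ⟨z0, hz0⟩
  have hTa : AffineIndependent ℝ (fun i : (insert a S : Finset (Fin n)) => p ↑i) :=
    hgen _ (by rw [Finset.card_insert_of_notMem haS, hS])
  let e : {x // x ∈ S} ↪ {x // x ∈ insert a S} :=
    ⟨fun x => ⟨x, Finset.mem_insert_of_mem x.2⟩,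
     fun x y h => Subtype.ext (by have h' := congrArg Subtype.val h; exact h')⟩
  have hSind : AffineIndependent ℝ (fun x : {x // x ∈ S} => p ↑x) := hTa.comp_embedding e
  have hDfin : Module.finrank ℝ D = r - 1 := by
    have hcard : Fintype.card {x // x ∈ S} = (r - 1) + 1 := by
      rw [Fintype.card_coe, hS]; omega
    have := hSind.finrank_vectorSpan hcard
    rwa [show Set.range (fun x : {x // x ∈ S} => p ↑x) = p '' ↑S by
      rw [Set.image_eq_range]; rfl] at this
  -- find a unit normal u
  have horthD := Submodule.finrank_add_finrank_orthogonal (K := D)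
  rw [hfr, hDfin] at horthD
  have hDorth_ne : Dᗮ ≠ ⊥ := by
    intro h
    rw [h, finrank_bot] at horthD; omega
  obtain ⟨u0, hu0D, hu0ne⟩ := Submodule.ne_bot_iff _ |>.mp hDorth_ne
  set u : EuclideanSpace ℝ (Fin r) := (‖u0‖⁻¹ : ℝ) • u0 with hu
  have hu1 : ‖u‖ = 1 := norm_smul_inv_norm hu0ne
  have huD : u ∈ Dᗮ := Submodule.smul_mem _ _ hu0D
  have hune : u ≠ 0 := by
    intro h; rw [h, norm_zero] at hu1; exact one_ne_zero hu1.symm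
  have hDu : D = (ℝ ∙ u)ᗮ := by
    apply Submodule.eq_of_le_of_finrank_le
    · intro d hd
      rw [Submodule.mem_orthogonal]
      intro w hw
      obtain ⟨c, rfl⟩ := Submodule.mem_span_singleton.mp hw
      have h0 : ⟪d, u⟫ = 0 := (Submodule.mem_orthogonal D u).mp huD d hd
      rw [real_inner_smul_left, real_inner_comm, h0, mul_zero]
    · have h1 : Module.finrank ℝ (ℝ ∙ u) = 1 := finrank_span_singleton hune
      have h2 := Submodule.finrank_add_finrank_orthogonal (K := (ℝ ∙ u))
      rw [hfr, h1] at h2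
      omega
  set z : EuclideanSpace ℝ (Fin r) := p z0 with hz
  have hzH : z ∈ affineSpan ℝ (p '' ↑S) :=
    subset_affineSpan ℝ _ (Set.mem_image_of_mem p hz0)
  -- points of S are fixed by the reflection
  have hfixS : ∀ j ∈ S, ⟪p j - z, u⟫ = 0 := by
    intro j hj
    have hmem : p j - z ∈ D := by
      have h1 : p j ∈ affineSpan ℝ (p '' ↑S) :=
        subset_affineSpan ℝ _ (Set.mem_image_of_mem p hj)
      have := AffineSubspace.vsub_mem_direction h1 hzH
      rwa [direction_affineSpan] at this
    exact (Submodule.mem_orthogonal D u).mp huD _ hmem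
  -- points outside S are moved
  have hout : ∀ x : Fin n, x ∉ S → ⟪p x - z, u⟫ ≠ 0 := by
    intro x hx hinner
    have hmem : p x - z ∈ (ℝ ∙ u)ᗮ := by
      rw [Submodule.mem_orthogonal]
      intro w hw
      obtain ⟨c, rfl⟩ := Submodule.mem_span_singleton.mp hw
      rw [real_inner_smul_left, real_inner_comm, hinner, mul_zero]
    rw [← hDu] at hmem
    have hxH : p x ∈ affineSpan ℝ (p '' ↑S) := by
      have := AffineSubspace.vadd_mem_of_mem_direction
        (by rw [direction_affineSpan]; exact hmem) hzH
      simpa using this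
    exact not_mem_aux p hgen S hS hx hxH
  -- the reflection
  set f : EuclideanSpace ℝ (Fin r) → EuclideanSpace ℝ (Fin r) := fun x => x - (2 * ⟪x - z, u⟫) • u with hf
  have hnorm : ∀ x y : EuclideanSpace ℝ (Fin r), ‖f x - y‖ ^ 2 = ‖x - y‖ ^ 2 + 4 * ⟪x - z, u⟫ * ⟪y - z, u⟫ := by
    intro x y
    have hxy : f x - y = (x - y) - (2 * ⟪x - z, u⟫) • u := by
      simp only [hf]; abel
    have h2 : ⟪x - y, u⟫ = ⟪x - z, u⟫ - ⟪y - z, u⟫ := by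
      rw [← inner_sub_left]; congr 1; abel
    rw [hxy, norm_sub_sq_real, real_inner_smul_right, norm_smul, Real.norm_eq_abs, hu1,
      mul_one, sq_abs, h2]
    ring
  have hiso : ∀ x y : EuclideanSpace ℝ (Fin r), ‖f x - f y‖ = ‖x - y‖ := by
    intro x y
    have h2 : ⟪x - y, u⟫ = ⟪x - z, u⟫ - ⟪y - z, u⟫ := by
      rw [← inner_sub_left]; congr 1; abel
    have hxy : f x - f y = (x - y) - (2 * ⟪x - y, u⟫) • u := by
      simp only [hf]
      rw [h2]
      rw [show (2 * (⟪x - z, u⟫ - ⟪y - z, u⟫)) • u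
          = (2 * ⟪x - z, u⟫) • u - (2 * ⟪y - z, u⟫) • u by
        rw [← sub_smul]; ring_nf]
      abel
    have hsq : ‖f x - f y‖ ^ 2 = ‖x - y‖ ^ 2 := by
      rw [hxy, norm_sub_sq_real, real_inner_smul_right, norm_smul, Real.norm_eq_abs, hu1,
        mul_one, sq_abs]
      ring
    exact sq_eq_imp hsq (norm_nonneg _) (norm_nonneg _)
  have hfixf : ∀ j ∈ S, f (p j) = p j := by
    intro j hj
    simp only [hf, hfixS j hj, mul_zero, zero_smul, sub_zero]
  -- the new configuration
  set q : Fin n → EuclideanSpace ℝ (Fin r) := fun i => if i ∈ A then f (p i) else p i with hq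
  have hequiv : FrameworkEquiv G p q := by
    intro i j hadj
    by_cases hi : i ∈ A <;> by_cases hj : j ∈ A
    · simp only [hq, if_pos hi, if_pos hj]; exact hiso _ _
    · have hjS : j ∈ S := (hsep i hi j hadj).resolve_left hj
      simp only [hq, if_pos hi, if_neg hj]
      conv_lhs => rw [← hfixf j hjS]
      exact hiso _ _
    · have hiS : i ∈ S := (hsep j hj i hadj.symm).resolve_left hi
      simp only [hq, if_neg hi, if_pos hj]
      rw [norm_sub_rev, norm_sub_rev (p i)]
      conv_lhs => rw [← hfixf i hiS]
      exact hiso _ _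
    · simp only [hq, if_neg hi, if_neg hj]
  have hdim' : IsRDimensional q := by
    set T : Finset (Fin n) := insert b S with hT
    have hTcard : T.card = r + 1 := by rw [hT, Finset.card_insert_of_notMem hbS, hS]
    have hTind := hgen T hTcard
    have hqp : (fun i : {x // x ∈ T} => q ↑i) = fun i : {x // x ∈ T} => p ↑i := by
      funext ⟨i, hi⟩
      have hiA : i ∉ A := by
        rcases Finset.mem_insert.mp hi with rfl | h
        · exact hb
        · exact fun hA => hAS i hA h
      simp only [hq, if_neg hiA]
    have hind' : AffineIndependent ℝ (fun i : {x // x ∈ T} => q ↑i) := by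
      rw [hqp]; exact hTind
    have htop : affineSpan ℝ (Set.range (fun i : {x // x ∈ T} => q ↑i)) = ⊤ := by
      rw [hind'.affineSpan_eq_top_iff_card_eq_finrank_add_one, Fintype.card_coe, hTcard, hfr]
    rw [IsRDimensional, eq_top_iff, ← htop]
    apply affineSpan_mono
    rintro y ⟨i, rfl⟩
    exact ⟨↑i, rfl⟩
  have hcong := hur r hr (by omega) q hdim' hequiv
  have hab := hcong a b
  have hqa : q a = f (p a) := by simp only [hq, if_pos ha]
  have hqb : q b = p b := by simp only [hq, if_neg hb]
  rw [hqa, hqb] at hab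
  have hsq : ‖f (p a) - p b‖ ^ 2 = ‖p a - p b‖ ^ 2 := by rw [hab]
  rw [hnorm] at hsq
  have hmul : ⟪p a - z, u⟫ * ⟪p b - z, u⟫ = 0 := by linarith
  exact mul_ne_zero (hout a haS) (hout b hbS) hmul

private lemma key_zero {n : ℕ} (hn : 2 ≤ n) (G : SimpleGraph (Fin n))
    (p : Fin n → EuclideanSpace ℝ (Fin 0)) (hur : UniversallyRigid G p)
    {A : Set (Fin n)} {a b : Fin n} (ha : a ∈ A) (hb : b ∉ A)
    (hsep : ∀ i ∈ A, ∀ j, G.Adj i j → j ∈ A) : False := by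
  classical
  haveI : Subsingleton (EuclideanSpace ℝ (Fin 0)) :=
    ⟨fun x y => by ext i; exact i.elim0⟩
  have hp0 : ∀ i j : Fin n, ‖p i - p j‖ = 0 := by
    intro i j
    rw [Subsingleton.elim (p i) (p j), sub_self, norm_zero]
  set e0 : EuclideanSpace ℝ (Fin 1) := EuclideanSpace.single 0 1 with he0
  have he0ne : e0 ≠ 0 := by
    intro h
    have := congrArg (fun v => v 0) h
    simp [he0, EuclideanSpace.single_apply] at this
  set q : Fin n → EuclideanSpace ℝ (Fin 1) := fun i => if i ∈ A then e0 else 0 with hq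
  have hequiv : FrameworkEquiv G p q := by
    intro i j hadj
    have : q i = q j := by
      by_cases hi : i ∈ A
      · simp only [hq, if_pos hi, if_pos (hsep i hi j hadj)]
      · have hj : j ∉ A := fun hj => hi (hsep j hj i hadj.symm)
        simp only [hq, if_neg hi, if_neg hj]
    rw [this, sub_self, norm_zero, hp0]
  have hdim : IsRDimensional q := by
    have hne : q a ≠ q b := by
      simp only [hq, if_pos ha, if_neg hb]
      exact he0ne
    have hind : AffineIndependent ℝ ![q a, q b] := affineIndependent_of_ne ℝ hne
    have htop : affineSpan ℝ (Set.range ![q a, q b]) = ⊤ := by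
      rw [hind.affineSpan_eq_top_iff_card_eq_finrank_add_one, finrank_euclideanSpace_fin]
      simp
    rw [IsRDimensional, eq_top_iff, ← htop]
    apply affineSpan_mono
    rintro y ⟨i, rfl⟩
    fin_cases i
    · exact ⟨a, rfl⟩
    · exact ⟨b, rfl⟩
  have hcong := hur 1 le_rfl (by omega) q hdim hequiv
  have hab := hcong a b
  rw [hp0] at hab
  have : q a - q b = e0 := by simp only [hq, if_pos ha, if_neg hb, sub_zero]
  rw [this] at hab
  exact he0ne (norm_eq_zero.mp hab)

/-- If `(G, p)` is an `r`-dimensional bar framework on `n` nodes in general position in `ℝ^r`,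
`r ≤ n - 2`, and `(G, p)` is universally rigid, then `G` is `(r+1)`-vertex connected. -/
theorem kConnected_of_universally_rigid_general_position
    (n r : ℕ) (hrn : r + 2 ≤ n) (G : SimpleGraph (Fin n))
    (p : Fin n → EuclideanSpace ℝ (Fin r))
    (hdim : IsRDimensional p) (hgen : InGeneralPosition p)
    (hur : UniversallyRigid G p) :
    IsKConnected G (r + 1) := by
  classical
  rcases eq_or_lt_of_le hrn with heq | hlt
  · -- n = r + 2 : show G = ⊤
    left
    refine ⟨heq.symm, ?_⟩
    ext i j
    simp only [SimpleGraph.top_adj]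
    constructor
    · exact fun h => h.ne
    · intro hij
      by_contra hadj
      rcases Nat.eq_zero_or_pos r with hr0 | hrpos
      · subst hr0
        refine key_zero (n := n) (by omega) G p hur (A := {i}) (a := i) (b := j)
          rfl ?_ ?_
        · intro h
          exact hij (Set.eq_of_mem_singleton h).symm
        · intro x hx j' hadj'
          rw [Set.eq_of_mem_singleton hx] at hadj'
          exfalso
          have h1 : j'.val ≠ i.val := fun h => hadj'.ne' (Fin.ext h)
          have h2 : j.val ≠ i.val := fun h => hij (Fin.ext h.symm)
          have h3 : j' = j := by
            have hj' := j'.isLt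
            have hi := i.isLt
            have hjj := j.isLt
            apply Fin.ext
            omega
          exact hadj (h3 ▸ hadj')
      · refine key_pos hrpos hrn G p hgen hur (Finset.univ \ {i, j}) ?_
          (A := {i}) (a := i) (b := j) rfl ?_ ?_ ?_ ?_ ?_
        · rw [Finset.card_sdiff_of_subset (Finset.subset_univ _), Finset.card_univ, Finset.card_pair hij]
          simp
          omega
        · intro h
          exact hij (Set.eq_of_mem_singleton h).symm
        · simp
        · simp
        · intro x hx
          rw [Set.eq_of_mem_singleton hx]
          simp
        · intro x hx j' hadj'
          rw [Set.eq_of_mem_singleton hx] at hadj'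
          right
          have h1 : j' ≠ i := hadj'.ne'
          have h2 : j' ≠ j := fun h => hadj (h ▸ hadj')
          simp [Finset.mem_sdiff, h1, h2]
  · -- r + 2 < n : connectivity after deleting r vertices
    right
    refine ⟨by omega, ?_⟩
    intro S hScard
    have hScard' : S.card = r := by simpa using hScard
    rw [SimpleGraph.connected_iff]
    have hex : ∃ x, x ∉ S := by
      by_contra h
      push_neg at h
      have huniv : S = Finset.univ := Finset.eq_univ_iff_forall.mpr h
      rw [huniv, Finset.card_univ, Fintype.card_fin] at hScard'
      omega
    have hnonempty : Nonempty ((↑S : Set (Fin n))ᶜ : Set (Fin n)) := by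
      obtain ⟨x, hx⟩ := hex
      exact ⟨⟨x, by simpa using hx⟩⟩
    refine ⟨?_, hnonempty⟩
    intro u v
    by_contra hreach
    set A : Set (Fin n) :=
      {i | ∃ h : i ∈ ((↑S : Set (Fin n))ᶜ),
        (G.induce ((↑S : Set (Fin n))ᶜ)).Reachable u ⟨i, h⟩} with hA
    have haA : (↑u : Fin n) ∈ A := ⟨u.2, SimpleGraph.Reachable.refl _⟩
    have hbA : (↑v : Fin n) ∉ A := by
      rintro ⟨h', hr'⟩
      exact hreach hr'
    have haS : (↑u : Fin n) ∉ S := fun h => u.2 (Finset.mem_coe.mpr h)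
    have hbS : (↑v : Fin n) ∉ S := fun h => v.2 (Finset.mem_coe.mpr h)
    have hAS : ∀ i ∈ A, i ∉ S := by
      rintro i ⟨h', _⟩ hiS
      exact h' (by simpa using hiS)
    have hsep : ∀ i ∈ A, ∀ j, G.Adj i j → j ∈ A ∨ j ∈ S := by
      rintro i ⟨hi', hru⟩ j hadj
      by_cases hjS : j ∈ S
      · exact Or.inr hjS
      · left
        have hj' : j ∈ ((↑S : Set (Fin n))ᶜ) := by simpa using hjS
        have hadj' : (G.induce ((↑S : Set (Fin n))ᶜ)).Adj ⟨i, hi'⟩ ⟨j, hj'⟩ := by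
          simpa using hadj
        exact ⟨hj', hru.trans hadj'.reachable⟩
    rcases Nat.eq_zero_or_pos r with hr0 | hrpos
    · have hS0 : S = ∅ := Finset.card_eq_zero.mp (by omega)
      subst hr0
      refine key_zero (by omega) G p hur haA hbA ?_
      intro i hi j hadj
      rcases hsep i hi j hadj with h | h
      · exact h
      · rw [hS0] at h
        exact absurd h (Finset.notMem_empty j)
    · exact key_pos hrpos hrn G p hgen hur S hScard' haA hbA haS hbS hAS hsep
end

section
/- Let G be a simple graph on n nodes, 1 ≤ r ≤ n−2, and let x^1,…,x^n ∈ ℝ^{n−r−1} be an orthogonal representation of G such that every subset of {x^1,…,x^n} of size n−r−1 is linearly independent. Let ξ ∈ ℝ^n satisfy X^T ξ = 0 with all ξ_i ≠ 0, where X^T is the matrix with columns x^1,…,x^n; set Z = Diag(ξ) X, and let p be the r-dimensional configuration in ℝ^r whose configuration matrix P is an n×r matrix whose columns form a basis of the null space of the matrix stacking Z^T on top of e^T. Then Ω = Z Z^T = Diag(ξ) X X^T Diag(ξ) is a positive semidefinite stress matrix of the framework (G,p) of rank n−r−1. -/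
open Matrix

/-- The final step of the proof of Theorem 1.1: given an orthogonal representation
`x¹, …, xⁿ` (the rows of `X`) of `G` in `ℝ^{n-r-1}` with every `n - r - 1` of the vectors
linearly independent, `ξ` with `Xᵀ ξ = 0` and all entries nonzero, `Z = Diag(ξ) X`, and `p`
the configuration whose configuration matrix `P` has columns forming a basis of the null space
of `[Zᵀ; eᵀ]`, the matrix `Ω = Z Zᵀ = Diag(ξ) X Xᵀ Diag(ξ)` is a positive semidefinite stress
matrix of `(G, p)` of rank `n - r - 1`. -/
theorem psd_stress_matrix_from_orthogonal_representation
    (n r : ℕ) (hr : 1 ≤ r) (hrn : r + 2 ≤ n) (G : SimpleGraph (Fin n))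
    (X : Matrix (Fin n) (Fin (n - r - 1)) ℝ)
    (horth : ∀ i j : Fin n, i ≠ j → ¬ G.Adj i j → X i ⬝ᵥ X j = 0)
    (hgen : ∀ s : Finset (Fin n), s.card = n - r - 1 →
      LinearIndependent ℝ (fun i : s => X i))
    (ξ : Fin n → ℝ) (hξ0 : Xᵀ *ᵥ ξ = 0) (hξ : ∀ i : Fin n, ξ i ≠ 0)
    (Z : Matrix (Fin n) (Fin (n - r - 1)) ℝ) (hZ : Z = Matrix.diagonal ξ * X)
    (P : Matrix (Fin n) (Fin r) ℝ)
    (hPindep : LinearIndependent ℝ (fun k : Fin r => fun i => P i k))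
    (hPspan : Submodule.span ℝ (Set.range (fun k : Fin r => fun i => P i k)) =
      LinearMap.ker
        (Matrix.fromRows Zᵀ (Matrix.of fun (_ : Unit) (_ : Fin n) => (1 : ℝ))).mulVecLin)
    (p : Fin n → EuclideanSpace ℝ (Fin r)) (hp : ∀ i k, p i k = P i k) :
    Z * Zᵀ = Matrix.diagonal ξ * X * Xᵀ * Matrix.diagonal ξ ∧
    IsStressMatrix G p (Z * Zᵀ) ∧ (Z * Zᵀ).PosSemidef ∧ (Z * Zᵀ).rank = n - r - 1 := by
  subst hZ
  set D := Matrix.diagonal ξ with hD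
  have hDT : Dᵀ = D := Matrix.diagonal_transpose ξ
  have hZT : (D * X)ᵀ = Xᵀ * D := by rw [Matrix.transpose_mul, hDT]
  -- Zᵀ kills the all-ones vector
  have hZTe : (D * X)ᵀ *ᵥ (fun _ => (1 : ℝ)) = 0 := by
    rw [hZT, ← Matrix.mulVec_mulVec]
    have : D *ᵥ (fun _ => (1 : ℝ)) = ξ := by
      ext i; simp [hD, Matrix.mulVec_diagonal]
    rw [this, hξ0]
  -- Zᵀ kills every column of P
  have hZTP : (D * X)ᵀ * P = 0 := by
    ext j k
    have hmem : (fun i => P i k) ∈ Submodule.span ℝ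
        (Set.range (fun k : Fin r => fun i => P i k)) :=
      Submodule.subset_span ⟨k, rfl⟩
    rw [hPspan, LinearMap.mem_ker] at hmem
    have := congrFun hmem (Sum.inl j)
    simp only [Matrix.mulVecLin_apply, Matrix.fromRows_mulVec, Sum.elim_inl,
      Pi.zero_apply] at this
    exact this
  have hPC : configMatrix p = P := by
    ext i k; exact hp i k
  refine ⟨by rw [Matrix.mul_assoc, hZT]; simp [Matrix.mul_assoc], ?_, ?_, ?_⟩
  · refine ⟨?_, ?_, ?_, ?_⟩
    · rw [Matrix.IsSymm, Matrix.transpose_mul, Matrix.transpose_transpose]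
    · intro i j hij hadj
      have h0 : X i ⬝ᵥ X j = 0 := horth i j hij hadj
      have heq : (D * X) * (D * X)ᵀ = D * (X * Xᵀ) * D := by
        rw [Matrix.mul_assoc, hZT]; simp [Matrix.mul_assoc]
      have h1 : (X * Xᵀ) i j = 0 := by
        simpa [Matrix.mul_apply, dotProduct] using h0
      rw [heq]
      simp [hD, Matrix.mul_diagonal, Matrix.diagonal_mul, h1]
    · rw [hPC, Matrix.mul_assoc, hZTP, Matrix.mul_zero]
    · rw [← Matrix.mulVec_mulVec, hZTe, Matrix.mulVec_zero]
  · have := Matrix.posSemidef_self_mul_conjTranspose (D * X)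
    simpa [Matrix.conjTranspose_eq_transpose_of_trivial] using this
  · rw [Matrix.rank_self_mul_transpose]
    have hdet : IsUnit D.det := by
      rw [hD, Matrix.det_diagonal]
      exact (Finset.prod_ne_zero_iff.mpr fun i _ => hξ i).isUnit
    rw [Matrix.rank_mul_eq_right_of_isUnit_det D X hdet]
    -- rank X = n - r - 1
    have hmn : n - r - 1 ≤ n := by omega
    obtain ⟨s, -, hscard⟩ := Finset.exists_subset_card_eq
      (show n - r - 1 ≤ (Finset.univ : Finset (Fin n)).card by simpa using hmn)
    have hind := hgen s hscard
    have hrank_sub : (X.submatrix ((↑) : s → Fin n) id).rank = Fintype.card s :=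
      LinearIndependent.rank_matrix hind
    have hcard : Fintype.card s = n - r - 1 := by
      simp [Fintype.card_coe, hscard]
    refine le_antisymm ?_ ?_
    · simpa using X.rank_le_card_width
    · calc n - r - 1 = (X.submatrix ((↑) : s → Fin n) id).rank := by
            rw [hrank_sub, hcard]
        _ ≤ X.rank := by
            rw [Matrix.rank_eq_finrank_span_row, Matrix.rank_eq_finrank_span_row]
            apply Submodule.finrank_mono
            apply Submodule.span_mono
            rintro - ⟨i, rfl⟩
            exact ⟨(i : Fin n), rfl⟩
end
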